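/- Suppose A_{K_1…K_n}(y, ẏ) are skew-symmetric in K_1,…,K_n and satisfy the Lepage condition ∑ (∂A_{K_1…K_n}/∂ẏ_s^P) ẏ_{j_1}^{K_1}⋯ẏ_{j_n}^{K_n} ε^{j_1…j_n} = 0 for all P, s. Then the function 𝓛 = (1/n!) A_{K_1…K_n} ẏ_{j_1}^{K_1}⋯ẏ_{j_n}^{K_n} ε^{j_1…j_n} satisfies ∑_K ẏ_j^K ∂𝓛/∂ẏ_j^K = n·𝓛 and more precisely ∑_K ẏ_k^K ∂𝓛/∂ẏ_j^K = δ_k^j 𝓛 for all j, k. -/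

import Mathlib

/-- The standard basis direction `∂/∂ẏ_j^K` in the space `ℝ^{n×M}` of velocity variables. -/
noncomputable def basisDir (n M : ℕ) (j : Fin n) (K : Fin M) : Fin n → Fin M → ℝ :=
  Pi.single j (Pi.single K 1)

/-- The Levi-Civita permutation symbol on `n` indices. -/
noncomputable def eps {n : ℕ} (f : Fin n → Fin n) : ℝ :=
  if h : Function.Bijective f then ((Equiv.Perm.sign (Equiv.ofBijective f h) : ℤ) : ℝ) else 0

open Finset

lemma eps_perm {n : ℕ} (σ : Equiv.Perm (Fin n)) :
    eps ⇑σ = ((Equiv.Perm.sign σ : ℤ) : ℝ) := by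
  have hb : Function.Bijective ⇑σ := σ.bijective
  rw [eps, dif_pos hb]
  have : Equiv.ofBijective ⇑σ hb = σ := Equiv.ext fun _ => rfl
  rw [this]

lemma sign_sq {n : ℕ} (σ : Equiv.Perm (Fin n)) :
    ((Equiv.Perm.sign σ : ℤ) : ℝ) * ((Equiv.Perm.sign σ : ℤ) : ℝ) = 1 := by
  have h : ((Equiv.Perm.sign σ : ℤ) * (Equiv.Perm.sign σ : ℤ)) = 1 := by
    rw [← Units.val_mul, Int.units_mul_self, Units.val_one]
  exact_mod_cast h

/-- contraction of a skew family with velocities and the Levi-Civita symbol -/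
lemma contract {n M : ℕ} (B : (Fin n → Fin M) → ℝ)
    (hB : ∀ (Kt : Fin n → Fin M) (σ : Equiv.Perm (Fin n)),
      B (Kt ∘ σ) = ((Equiv.Perm.sign σ : ℤ) : ℝ) * B Kt)
    (w : Fin n → Fin M → ℝ) :
    ∑ Kt : Fin n → Fin M, ∑ jt : Fin n → Fin n,
        B Kt * (∏ s : Fin n, w (jt s) (Kt s)) * eps jt
      = (n.factorial : ℝ) * ∑ Kt : Fin n → Fin M, B Kt * ∏ s : Fin n, w s (Kt s) := by
  classical
  rw [Finset.sum_comm]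
  set F : (Fin n → Fin n) → ℝ := fun jt =>
    ∑ Kt : Fin n → Fin M, B Kt * (∏ s : Fin n, w (jt s) (Kt s)) * eps jt with hF
  have himg : ∑ jt : Fin n → Fin n, F jt = ∑ σ : Equiv.Perm (Fin n), F ⇑σ := by
    set emb : Equiv.Perm (Fin n) ↪ (Fin n → Fin n) :=
      ⟨fun σ => ⇑σ, fun a b hab => Equiv.coe_fn_injective hab⟩ with hemb
    rw [show (∑ σ : Equiv.Perm (Fin n), F ⇑σ) = ∑ x ∈ Finset.map emb Finset.univ, F x from
      (Finset.sum_map Finset.univ emb F).symm]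
    symm
    apply Finset.sum_subset (Finset.subset_univ _)
    intro x _ hx
    have hnb : ¬ Function.Bijective x := by
      intro hb
      exact hx (Finset.mem_map.2 ⟨Equiv.ofBijective x hb, Finset.mem_univ _, rfl⟩)
    have hz : eps x = 0 := dif_neg hnb
    simp [hF, hz]
  have hσ : ∀ σ : Equiv.Perm (Fin n),
      F ⇑σ = ∑ Kt : Fin n → Fin M, B Kt * ∏ s : Fin n, w s (Kt s) := by
    intro σ
    set e : (Fin n → Fin M) ≃ (Fin n → Fin M) := Equiv.arrowCongr σ.symm (Equiv.refl _) with he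
    have heKt : ∀ Kt : Fin n → Fin M, e Kt = Kt ∘ ⇑σ := fun _ => rfl
    have := (Equiv.sum_comp e (fun Kt : Fin n → Fin M =>
      B Kt * (∏ s : Fin n, w (σ s) (Kt s)) * eps ⇑σ)).symm
    rw [hF]
    simp only [this, heKt]
    have : ∀ Kt : Fin n → Fin M,
        B (Kt ∘ ⇑σ) * (∏ s : Fin n, w (σ s) ((Kt ∘ ⇑σ) s)) * eps ⇑σ
          = B Kt * ∏ s : Fin n, w s (Kt s) := by
      intro Kt
      have h1 : (∏ s : Fin n, w (σ s) ((Kt ∘ ⇑σ) s)) = ∏ s : Fin n, w s (Kt s) :=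
        Equiv.prod_comp σ (fun s => w s (Kt s))
      rw [h1, hB Kt σ, eps_perm]
      have h2 := sign_sq σ
      linear_combination (B Kt * ∏ s : Fin n, w s (Kt s)) * h2
    rw [Finset.sum_congr rfl (fun Kt _ => this Kt)]
  rw [himg, Finset.sum_congr rfl (fun σ _ => hσ σ), Finset.sum_const]
  simp [Fintype.card_perm, Fintype.card_fin, nsmul_eq_mul]

/-- pairing lemma: contraction with a repeated velocity row vanishes by skew-symmetry -/
lemma pairzero {n M : ℕ} (v : Fin n → Fin M → ℝ) (B : (Fin n → Fin M) → ℝ)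
    (hB : ∀ (Kt : Fin n → Fin M) (σ : Equiv.Perm (Fin n)),
      B (Kt ∘ σ) = ((Equiv.Perm.sign σ : ℤ) : ℝ) * B Kt)
    (j k : Fin n) (hjk : k ≠ j) :
    ∑ Kt : Fin n → Fin M,
      v k (Kt j) * B Kt * ∏ s ∈ Finset.univ.erase j, v s (Kt s) = 0 := by
  classical
  set τ : Equiv.Perm (Fin n) := Equiv.swap j k with hτ
  set f : (Fin n → Fin M) → ℝ := fun Kt =>
    v k (Kt j) * B Kt * ∏ s ∈ Finset.univ.erase j, v s (Kt s) with hf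
  have hτs : ∀ Kt : Fin n → Fin M, f (Kt ∘ ⇑τ) = - f Kt := by
    intro Kt
    have hsign : ((Equiv.Perm.sign τ : ℤ) : ℝ) = -1 := by
      rw [hτ, Equiv.Perm.sign_swap (Ne.symm hjk)]; norm_num
    have hBτ : B (Kt ∘ ⇑τ) = - B Kt := by rw [hB Kt τ, hsign]; ring
    have hkj : (Kt ∘ ⇑τ) j = Kt k := by simp [hτ, Equiv.swap_apply_left]
    have hk : k ∈ Finset.univ.erase j := Finset.mem_erase.2 ⟨hjk, Finset.mem_univ k⟩
    have hsplit1 : ∏ s ∈ Finset.univ.erase j, v s ((Kt ∘ ⇑τ) s)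
        = v k (Kt j) * ∏ s ∈ (Finset.univ.erase j).erase k, v s (Kt s) := by
      rw [← Finset.mul_prod_erase _ _ hk]
      congr 1
      · simp [hτ, Equiv.swap_apply_right]
      · apply Finset.prod_congr rfl
        intro s hs
        have h1 : s ≠ k := (Finset.mem_erase.1 hs).1
        have h2 : s ≠ j := (Finset.mem_erase.1 (Finset.mem_erase.1 hs).2).1
        simp [hτ, Equiv.swap_apply_of_ne_of_ne h2 h1]
    have hsplit2 : ∏ s ∈ Finset.univ.erase j, v s (Kt s)
        = v k (Kt k) * ∏ s ∈ (Finset.univ.erase j).erase k, v s (Kt s) :=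
      (Finset.mul_prod_erase _ _ hk).symm
    rw [hf]
    simp only [hkj, hBτ, hsplit1, hsplit2]
    ring
  set e : (Fin n → Fin M) ≃ (Fin n → Fin M) := Equiv.arrowCongr τ.symm (Equiv.refl _) with he
  have hsum : ∑ Kt : Fin n → Fin M, f Kt = - ∑ Kt : Fin n → Fin M, f Kt := by
    calc ∑ Kt : Fin n → Fin M, f Kt = ∑ Kt : Fin n → Fin M, f (e Kt) :=
          (Equiv.sum_comp e f).symm
      _ = ∑ Kt : Fin n → Fin M, - f Kt :=
          Finset.sum_congr rfl (fun Kt _ => hτs Kt)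
      _ = - ∑ Kt : Fin n → Fin M, f Kt := by rw [Finset.sum_neg_distrib]
  linarith

/-- Corollary 5.2: if the skew-symmetric coefficients `A_{K₁…Kₙ}(y,ẏ)` satisfy
the Lepage condition `∑ (∂A_{K₁…Kₙ}/∂ẏ_s^P) ẏ_{j₁}^{K₁}⋯ẏ_{jₙ}^{Kₙ} ε^{j₁…jₙ} = 0`, then the
Lagrange function `𝓛 = (1/n!) A_{K₁…Kₙ} ẏ_{j₁}^{K₁}⋯ẏ_{jₙ}^{Kₙ} ε^{j₁…jₙ}` satisfies
`∑_{j,K} ẏ_j^K ∂𝓛/∂ẏ_j^K = n·𝓛` and, more precisely, the Zermelo conditions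
`∑_K ẏ_k^K ∂𝓛/∂ẏ_j^K = δ_k^j 𝓛`. -/
theorem lepage_condition_implies_zermelo
    (n M : ℕ)
    (A : (Fin M → ℝ) → (Fin n → Fin M → ℝ) → (Fin n → Fin M) → ℝ)
    (hA : ∀ (y : Fin M → ℝ) (Kt : Fin n → Fin M), Differentiable ℝ fun v => A y v Kt)
    (hskew : ∀ (y : Fin M → ℝ) (v : Fin n → Fin M → ℝ)
      (Kt : Fin n → Fin M) (σ : Equiv.Perm (Fin n)),
      A y v (Kt ∘ σ) = ((Equiv.Perm.sign σ : ℤ) : ℝ) * A y v Kt)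
    (L : (Fin M → ℝ) → (Fin n → Fin M → ℝ) → ℝ)
    (hL : ∀ y v, L y v =
      (n.factorial : ℝ)⁻¹ * ∑ Kt : Fin n → Fin M, ∑ jt : Fin n → Fin n,
        A y v Kt * (∏ s : Fin n, v (jt s) (Kt s)) * eps jt)
    (hLepage : ∀ (y : Fin M → ℝ) (v : Fin n → Fin M → ℝ) (P : Fin M) (s : Fin n),
      ∑ Kt : Fin n → Fin M, ∑ jt : Fin n → Fin n,
        fderiv ℝ (fun w => A y w Kt) v (basisDir n M s P) *
          (∏ t : Fin n, v (jt t) (Kt t)) * eps jt = 0)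
    (y : Fin M → ℝ) (v : Fin n → Fin M → ℝ) :
    (∑ j : Fin n, ∑ K : Fin M, v j K * fderiv ℝ (L y) v (basisDir n M j K) =
        (n : ℝ) * L y v) ∧
    (∀ j k : Fin n,
      ∑ K : Fin M, v k K * fderiv ℝ (L y) v (basisDir n M j K) =
        (if k = j then L y v else 0)) := by
  classical
  have hfact : (n.factorial : ℝ) ≠ 0 := Nat.cast_ne_zero.2 (Nat.factorial_ne_zero n)
  -- the simplified form of the Lagrangian
  have hLy : L y = fun u : Fin n → Fin M → ℝ =>
      ∑ Kt : Fin n → Fin M, A y u Kt * ∏ s : Fin n, u s (Kt s) := by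
    funext u
    rw [hL y u, contract (A y u) (fun Kt σ => hskew y u Kt σ) u,
      inv_mul_cancel_left₀ hfact]
  -- the continuous linear evaluation maps
  set E : Fin n → Fin M → ((Fin n → Fin M → ℝ) →L[ℝ] ℝ) := fun t c =>
    (ContinuousLinearMap.proj c).comp
      (ContinuousLinearMap.proj (R := ℝ) (φ := fun _ : Fin n => Fin M → ℝ) t) with hE
  have hEapp : ∀ (t : Fin n) (c : Fin M) (j : Fin n) (K : Fin M),
      E t c (basisDir n M j K) = if t = j then (if c = K then (1:ℝ) else 0) else 0 := by
    intro t c j K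
    show basisDir n M j K t c = _
    simp [basisDir, Pi.single_apply, ite_apply]
  -- the derivative of the simplified Lagrangian
  set D : (Fin n → Fin M → ℝ) →L[ℝ] ℝ := ∑ Kt : Fin n → Fin M,
    (A y v Kt • (∑ t : Fin n, (∏ s ∈ Finset.univ.erase t, v s (Kt s)) • E t (Kt t))
      + (∏ s : Fin n, v s (Kt s)) • fderiv ℝ (fun w => A y w Kt) v) with hD
  have hderiv : HasFDerivAt (L y) D v := by
    rw [hLy, hD]
    apply HasFDerivAt.fun_sum
    intro Kt _
    have hprod : HasFDerivAt (fun u : Fin n → Fin M → ℝ => ∏ s : Fin n, u s (Kt s))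
        (∑ t : Fin n, (∏ s ∈ Finset.univ.erase t, v s (Kt s)) • E t (Kt t)) v := by
      exact HasFDerivAt.finset_prod (u := Finset.univ)
        (g := fun t (u : Fin n → Fin M → ℝ) => u t (Kt t)) (g' := fun t => E t (Kt t)) (x := v)
        (fun t _ => (E t (Kt t)).hasFDerivAt)
    exact ((hA y Kt) v).hasFDerivAt.mul hprod
  have hfd : fderiv ℝ (L y) v = D := hderiv.fderiv
  -- value of the derivative on basis directions
  have hDapp : ∀ (j : Fin n) (K : Fin M),
      D (basisDir n M j K) = ∑ Kt : Fin n → Fin M,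
        (A y v Kt * (if Kt j = K then ∏ s ∈ Finset.univ.erase j, v s (Kt s) else 0)
          + (∏ s : Fin n, v s (Kt s)) *
              fderiv ℝ (fun w => A y w Kt) v (basisDir n M j K)) := by
    intro j K
    rw [hD, ContinuousLinearMap.sum_apply]
    apply Finset.sum_congr rfl
    intro Kt _
    rw [ContinuousLinearMap.add_apply, ContinuousLinearMap.smul_apply,
      ContinuousLinearMap.smul_apply, ContinuousLinearMap.sum_apply, smul_eq_mul, smul_eq_mul]
    congr 1
    have hterm : ∀ t : Fin n,
        ((∏ s ∈ Finset.univ.erase t, v s (Kt s)) • E t (Kt t)) (basisDir n M j K)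
          = if t = j then (if Kt j = K then ∏ s ∈ Finset.univ.erase j, v s (Kt s) else 0)
            else 0 := by
      intro t
      rw [ContinuousLinearMap.smul_apply, hEapp, smul_eq_mul]
      by_cases ht : t = j
      · subst ht
        by_cases hc : Kt t = K <;> simp [hc]
      · simp [ht]
    rw [Finset.sum_congr rfl fun t _ => hterm t, Finset.sum_ite_eq' Finset.univ j]
    simp
  -- the Zermelo conditions
  have key : ∀ j k : Fin n,
      ∑ K : Fin M, v k K * fderiv ℝ (L y) v (basisDir n M j K)
        = if k = j then L y v else 0 := by
    intro j k
    simp only [hfd, hDapp]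
    have hsplit : ∀ K : Fin M,
        v k K * (∑ Kt : Fin n → Fin M,
          (A y v Kt * (if Kt j = K then ∏ s ∈ Finset.univ.erase j, v s (Kt s) else 0)
            + (∏ s : Fin n, v s (Kt s)) *
                fderiv ℝ (fun w => A y w Kt) v (basisDir n M j K)))
          = (∑ Kt : Fin n → Fin M,
              v k K * (A y v Kt *
                (if Kt j = K then ∏ s ∈ Finset.univ.erase j, v s (Kt s) else 0)))
            + v k K * (∑ Kt : Fin n → Fin M,
              (∏ s : Fin n, v s (Kt s)) *
                fderiv ℝ (fun w => A y w Kt) v (basisDir n M j K)) := by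
      intro K
      rw [Finset.sum_add_distrib, mul_add, Finset.mul_sum]
    rw [Finset.sum_congr rfl fun K _ => hsplit K, Finset.sum_add_distrib]
    -- the Lepage part vanishes
    have hQ : ∀ K : Fin M,
        ∑ Kt : Fin n → Fin M, (∏ s : Fin n, v s (Kt s)) *
          fderiv ℝ (fun w => A y w Kt) v (basisDir n M j K) = 0 := by
      intro K
      have hskew' : ∀ (Kt : Fin n → Fin M) (σ : Equiv.Perm (Fin n)),
          fderiv ℝ (fun w => A y w (Kt ∘ ⇑σ)) v (basisDir n M j K)
            = ((Equiv.Perm.sign σ : ℤ) : ℝ) *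
              fderiv ℝ (fun w => A y w Kt) v (basisDir n M j K) := by
        intro Kt σ
        have hfun : (fun w => A y w (Kt ∘ ⇑σ))
            = fun w => ((Equiv.Perm.sign σ : ℤ) : ℝ) * A y w Kt :=
          funext fun w => hskew y w Kt σ
        rw [hfun, fderiv_const_mul ((hA y Kt) v), ContinuousLinearMap.smul_apply, smul_eq_mul]
      have hc : (∑ Kt : Fin n → Fin M, ∑ jt : Fin n → Fin n,
            fderiv ℝ (fun w => A y w Kt) v (basisDir n M j K) *
              (∏ t : Fin n, v (jt t) (Kt t)) * eps jt)
          = (n.factorial : ℝ) * ∑ Kt : Fin n → Fin M,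
              fderiv ℝ (fun w => A y w Kt) v (basisDir n M j K) *
                ∏ s : Fin n, v s (Kt s) :=
        contract (fun Kt => fderiv ℝ (fun w => A y w Kt) v (basisDir n M j K)) hskew' v
      have hlep := hLepage y v K j
      rw [hc] at hlep
      have hS := (mul_eq_zero.1 hlep).resolve_left hfact
      calc ∑ Kt : Fin n → Fin M, (∏ s : Fin n, v s (Kt s)) *
            fderiv ℝ (fun w => A y w Kt) v (basisDir n M j K)
          = ∑ Kt : Fin n → Fin M,
              fderiv ℝ (fun w => A y w Kt) v (basisDir n M j K) *
                ∏ s : Fin n, v s (Kt s) :=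
            Finset.sum_congr rfl fun Kt _ => mul_comm _ _
        _ = 0 := hS
    have hQ' : (∑ K : Fin M, v k K * ∑ Kt : Fin n → Fin M,
        (∏ s : Fin n, v s (Kt s)) *
          fderiv ℝ (fun w => A y w Kt) v (basisDir n M j K)) = 0 :=
      calc (∑ K : Fin M, v k K * ∑ Kt : Fin n → Fin M,
            (∏ s : Fin n, v s (Kt s)) *
              fderiv ℝ (fun w => A y w Kt) v (basisDir n M j K))
          = ∑ _K : Fin M, (0:ℝ) :=
            Finset.sum_congr rfl (fun K _ => by rw [hQ K, mul_zero])
        _ = 0 := Finset.sum_const_zero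
    rw [hQ', add_zero]
    -- the algebraic part
    have hP : ∑ K : Fin M, ∑ Kt : Fin n → Fin M,
        v k K * (A y v Kt * (if Kt j = K then ∏ s ∈ Finset.univ.erase j, v s (Kt s) else 0))
      = ∑ Kt : Fin n → Fin M,
          v k (Kt j) * A y v Kt * ∏ s ∈ Finset.univ.erase j, v s (Kt s) := by
      rw [Finset.sum_comm]
      apply Finset.sum_congr rfl
      intro Kt _
      rw [Finset.sum_congr rfl fun K _ => by
        rw [mul_ite, mul_ite, mul_zero, mul_zero]]
      rw [Finset.sum_ite_eq Finset.univ (Kt j)]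
      simp [mul_assoc]
    rw [hP]
    by_cases hkj : k = j
    · subst hkj
      rw [if_pos rfl, hLy]
      apply Finset.sum_congr rfl
      intro Kt _
      rw [mul_comm (v k (Kt k)) (A y v Kt), mul_assoc,
        Finset.mul_prod_erase Finset.univ (fun s => v s (Kt s)) (Finset.mem_univ k)]
    · rw [if_neg hkj]
      exact pairzero v (A y v) (fun Kt σ => hskew y v Kt σ) j k hkj
  refine ⟨?_, key⟩
  rw [Finset.sum_congr rfl fun j _ => key j j]
  simp [Finset.sum_const, mul_comm]
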